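/- Let z ∈ ℂ with ‖z‖ < 1 and let n ≥ 1. Then the n-th iterated derivative at 0 of the function x ↦ (1 − z·exp(−x))⁻¹ from ℂ to ℂ equals (−1)^n · ∑_{k=0}^{∞} k^n z^k; that is, iteratedDeriv n (fun x => (1 − z * exp(−x))⁻¹) 0 = (−1)^n * ∑' (k : ℕ), (k : ℂ)^n * z^k. -/

import Mathlib

open Complex Filter Topology

/-- For `‖z‖ < 1` and `n ≥ 1`, the `n`-th iterated derivative at `0`
of `x ↦ (1 - z·exp(-x))⁻¹` equals `(-1)^n ∑_{k≥0} k^n z^k`. -/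
theorem iteratedDeriv_one_sub_mul_exp_neg (z : ℂ) (hz : ‖z‖ < 1) (n : ℕ) (hn : 1 ≤ n) :
    iteratedDeriv n (fun x : ℂ => (1 - z * Complex.exp (-x))⁻¹) 0
      = (-1 : ℂ) ^ n * ∑' k : ℕ, (k : ℂ) ^ n * z ^ k := by
  -- choose r > 0 with exp r * ‖z‖ < 1
  obtain ⟨r, hr0, hq⟩ : ∃ r : ℝ, 0 < r ∧ Real.exp r * ‖z‖ < 1 := by
    have hcont : Tendsto (fun t : ℝ => Real.exp t * ‖z‖) (𝓝 0) (𝓝 (Real.exp 0 * ‖z‖)) := by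
      exact (Real.continuous_exp.continuousAt.mul continuousAt_const)
    rw [Real.exp_zero, one_mul] at hcont
    have h1 : ∀ᶠ t : ℝ in 𝓝[>] 0, Real.exp t * ‖z‖ < 1 :=
      (hcont.mono_left nhdsWithin_le_nhds).eventually_lt_const hz
    have h2 : ∀ᶠ t : ℝ in 𝓝[>] 0, 0 < t := self_mem_nhdsWithin
    exact ((h1.and h2).exists).imp fun t ht => ⟨ht.2, ht.1⟩
  set q : ℝ := Real.exp r * ‖z‖ with hqdef
  have hq0 : 0 ≤ q := mul_nonneg (Real.exp_pos r).le (norm_nonneg z)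
  set S : ℕ → ℂ → ℂ := fun m x => ∑' k : ℕ, (-(k : ℂ)) ^ m * z ^ k * Complex.exp (-(k : ℂ) * x)
    with hS
  -- basic norm estimate for terms on the ball
  have hterm : ∀ (m k : ℕ) (x : ℂ), x ∈ Metric.ball (0 : ℂ) r →
      ‖(-(k : ℂ)) ^ m * z ^ k * Complex.exp (-(k : ℂ) * x)‖ ≤ (k : ℝ) ^ m * q ^ k := by
    intro m k x hx
    rw [Metric.mem_ball, dist_zero_right] at hx
    have h3 : ‖x‖ < r := hx
    have hre : -x.re ≤ r := by
      have := Complex.abs_re_le_norm x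
      have h2 := (abs_le.mp this).1
      linarith
    have hexp : ‖Complex.exp (-(k : ℂ) * x)‖ ≤ Real.exp (k * r) := by
      rw [Complex.norm_exp]
      apply Real.exp_le_exp.mpr
      have h4 : (-(k : ℂ) * x).re = (k : ℝ) * (-x.re) := by simp
      rw [h4]
      exact mul_le_mul_of_nonneg_left hre (Nat.cast_nonneg k)
    calc ‖(-(k : ℂ)) ^ m * z ^ k * Complex.exp (-(k : ℂ) * x)‖
        = (k : ℝ) ^ m * ‖z‖ ^ k * ‖Complex.exp (-(k : ℂ) * x)‖ := by
          simp [norm_mul, norm_pow]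
      _ ≤ (k : ℝ) ^ m * ‖z‖ ^ k * Real.exp (k * r) := by gcongr
      _ = (k : ℝ) ^ m * q ^ k := by
          rw [hqdef, mul_pow, ← Real.exp_nat_mul]
          ring
  have hsum : ∀ m : ℕ, Summable fun k : ℕ => (k : ℝ) ^ m * q ^ k := by
    intro m
    apply summable_pow_mul_geometric_of_norm_lt_one
    rwa [Real.norm_eq_abs, _root_.abs_of_nonneg hq0]
  -- summability of S m at points of the ball
  have hsummS : ∀ (m : ℕ) (x : ℂ), x ∈ Metric.ball (0 : ℂ) r →
      Summable fun k : ℕ => (-(k : ℂ)) ^ m * z ^ k * Complex.exp (-(k : ℂ) * x) := by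
    intro m x hx
    exact Summable.of_norm ((hsum m).of_nonneg_of_le (fun k => norm_nonneg _)
      (fun k => hterm m k x hx))
  have hball : (0 : ℂ) ∈ Metric.ball (0 : ℂ) r := Metric.mem_ball_self hr0
  -- derivative of S m on the ball is S (m+1)
  have hderivS : ∀ (m : ℕ) (x : ℂ), x ∈ Metric.ball (0 : ℂ) r →
      HasDerivAt (S m) (S (m + 1) x) x := by
    intro m x hx
    have key := hasDerivAt_tsum_of_isPreconnected
      (u := fun k : ℕ => (k : ℝ) ^ (m + 1) * q ^ k)
      (g := fun (k : ℕ) (y : ℂ) => (-(k : ℂ)) ^ m * z ^ k * Complex.exp (-(k : ℂ) * y))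
      (g' := fun (k : ℕ) (y : ℂ) => (-(k : ℂ)) ^ (m + 1) * z ^ k * Complex.exp (-(k : ℂ) * y))
      (hsum (m + 1)) Metric.isOpen_ball (convex_ball (0 : ℂ) r).isPreconnected
      (fun k y hy => by
        have h1 : HasDerivAt (fun w : ℂ => Complex.exp (-(k : ℂ) * w))
            (Complex.exp (-(k : ℂ) * y) * -(k : ℂ)) y := by
          simpa using ((hasDerivAt_id y).const_mul (-(k : ℂ))).cexp
        have h2 := h1.const_mul ((-(k : ℂ)) ^ m * z ^ k)
        refine h2.congr_deriv ?_
        ring)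
      (fun k y hy => hterm (m + 1) k y hy) hball (hsummS m 0 hball) hx
    simp only [hS]
    exact key
  -- iterated derivatives of S 0 on the ball
  have hiter : ∀ (m : ℕ) (x : ℂ), x ∈ Metric.ball (0 : ℂ) r →
      iteratedDeriv m (S 0) x = S m x := by
    intro m
    induction m with
    | zero => intro x _; simp
    | succ m ih =>
      intro x hx
      rw [iteratedDeriv_succ]
      have heq : iteratedDeriv m (S 0) =ᶠ[𝓝 x] S m :=
        Filter.eventuallyEq_of_mem (Metric.isOpen_ball.mem_nhds hx) ih
      rw [heq.deriv_eq]
      exact (hderivS m x hx).deriv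
  -- the original function agrees with S 0 on the ball
  have hFeq : ∀ x ∈ Metric.ball (0 : ℂ) r, (1 - z * Complex.exp (-x))⁻¹ = S 0 x := by
    intro x hx
    rw [Metric.mem_ball, dist_zero_right] at hx
    have h3 : ‖x‖ < r := hx
    have hre : -x.re ≤ r := by
      have := Complex.abs_re_le_norm x
      have h2 := (abs_le.mp this).1
      linarith
    have hw : ‖z * Complex.exp (-x)‖ < 1 := by
      rw [norm_mul]
      have he : ‖Complex.exp (-x)‖ = Real.exp (-x).re := by
        rw [Complex.norm_exp]
      rw [he]
      calc ‖z‖ * Real.exp (-x).re ≤ ‖z‖ * Real.exp r := by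
            gcongr
            · simpa using hre
        _ = q := by rw [hqdef]; ring
        _ < 1 := hq
    rw [← tsum_geometric_of_norm_lt_one hw]
    simp only [hS]
    apply tsum_congr
    intro k
    rw [mul_pow, ← Complex.exp_nat_mul, pow_zero, one_mul]
    ring_nf
  -- conclude
  have hFS : (fun x : ℂ => (1 - z * Complex.exp (-x))⁻¹) =ᶠ[𝓝 (0 : ℂ)] S 0 :=
    Filter.eventuallyEq_of_mem (Metric.isOpen_ball.mem_nhds hball) hFeq
  rw [hFS.iteratedDeriv_eq, hiter n 0 hball]
  simp only [hS, mul_zero, neg_zero, Complex.exp_zero, mul_one]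
  rw [← tsum_mul_left]
  apply tsum_congr
  intro k
  rw [neg_pow]
  ring
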